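/- For every n ∈ ℕ, the line-rotating Turning Machine L¹_n computes its target configuration (the line of n monomers along direction ρ((1,0))=(0,1) with all states 0); moreover, in every reachable configuration of L¹_n no monomer is blocked. -/

import Mathlib

namespace TuringMachineFolding

/-- Points of the triangular grid, coordinatised by `ℤ × ℤ`. -/
abbrev Pt : Type := ℤ × ℤ

/-- The six triangular-grid unit vectors `x, y, w, -x, -y, -w`. -/
def unitVecs : Set Pt :=
  {((1 : ℤ), (0 : ℤ)), (0, 1), (-1, 1), (-1, 0), (0, -1), (1, -1)}

/-- Anticlockwise rotation by `π/3`: the linear map with `ρ(1,0) = (0,1)`, `ρ(0,1) = (-1,1)`. -/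
def rot : Pt → Pt := fun p => (-p.2, p.1 + p.2)

/-- Clockwise rotation by `π/3`, the inverse of `rot`. -/
def rotInv : Pt → Pt := fun p => (p.1 + p.2, -p.1)

/-- `rot` as a permutation of the grid, so that integer powers `rotE ^ t` make sense. -/
def rotE : Equiv.Perm Pt where
  toFun := rot
  invFun := rotInv
  left_inv := by
    rintro ⟨a, b⟩
    simp only [rot, rotInv, Prod.mk.injEq]
    constructor <;> ring
  right_inv := by
    rintro ⟨a, b⟩
    simp only [rot, rotInv, Prod.mk.injEq]
    constructor <;> ring

/-- Scalar multiple of a grid vector. -/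
def zsmulPt (m : ℤ) (p : Pt) : Pt := (m * p.1, m * p.2)

/-- A configuration of a Turning Machine of length `n`: states and positions of the monomers
`m_0, …, m_{n-1}` (indices `≥ n` carry irrelevant junk values), such that `pos m_0 = (0,0)`,
consecutive positions differ by one of the six unit vectors, and positions are pairwise
distinct. -/
structure Config (n : ℕ) where
  st : ℕ → ℤ
  pos : ℕ → Pt
  pos_zero : pos 0 = (0, 0)
  step_unit : ∀ i, i + 1 < n → pos (i + 1) - pos i ∈ unitVecs
  pos_inj : ∀ i < n, ∀ j < n, pos i = pos j → i = j

/-- The direction of monomer `m_i` (meaningful for `i + 1 < n`). -/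
def dir {n : ℕ} (c : Config n) (i : ℕ) : Pt := c.pos (i + 1) - c.pos i

/-- The translation vector applied to the head of `m_i` when the turning rule fires at `m_i`:
`ρ²(d_i)` for a positive state, `ρ⁻²(d_i)` for a negative state. -/
def delta {n : ℕ} (c : Config n) (i : ℕ) : Pt :=
  if 0 < c.st i then rot (rot (dir c i)) else rotInv (rotInv (dir c i))

/-- The state sequence after applying the turning rule at monomer `i`. -/
def nextSt {n : ℕ} (c : Config n) (i : ℕ) : ℕ → ℤ := fun j =>
  if j = i then (if 0 < c.st i then c.st i - 1 else c.st i + 1) else c.st j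

/-- The position sequence after applying the turning rule at monomer `i`. -/
def nextPos {n : ℕ} (c : Config n) (i : ℕ) : ℕ → Pt := fun j =>
  if i < j then c.pos j + delta c i else c.pos j

/-- The turning rule applied at monomer `i` transforms `c` into `c'`.  The requirement that
`c'` is again a `Config` (pairwise distinct positions) encodes that the move is not blocked. -/
def StepAt {n : ℕ} (c : Config n) (i : ℕ) (c' : Config n) : Prop :=
  i < n ∧ c.st i ≠ 0 ∧ (∀ j < n, c'.st j = nextSt c i j) ∧ (∀ j < n, c'.pos j = nextPos c i j)

/-- The turning rule is applicable to monomer `i` in configuration `c`. -/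
def Applicable {n : ℕ} (c : Config n) (i : ℕ) : Prop := ∃ c', StepAt c i c'

/-- Monomer `i` is blocked in `c`: nonzero state, but no applicable rule. -/
def Blocked {n : ℕ} (c : Config n) (i : ℕ) : Prop :=
  i < n ∧ c.st i ≠ 0 ∧ ¬ Applicable c i

/-- One asynchronous step of the machine. -/
def Step {n : ℕ} (c c' : Config n) : Prop := ∃ i, StepAt c i c'

/-- `c` is reachable from `c₀` by a finite sequence of rule applications. -/
def Reachable {n : ℕ} (c₀ c : Config n) : Prop := Relation.ReflTransGen Step c₀ c

/-- No rule is applicable in `c`. -/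
def Terminal {n : ℕ} (c : Config n) : Prop := ∀ i, ¬ Applicable c i

/-- `c` is permanently blocked: some state is nonzero but no monomer admits an applicable rule. -/
def PermBlocked {n : ℕ} (c : Config n) : Prop :=
  (∃ i < n, c.st i ≠ 0) ∧ Terminal c

/-- The Turning Machine with initial configuration `c₀` computes the target configuration `ct`:
every maximal sequence of rule applications from `c₀` is finite and ends in `ct`
(configurations are compared on the meaningful indices `< n`). -/
def Computes {n : ℕ} (c₀ ct : Config n) : Prop :=
  (¬ ∃ f : ℕ → Config n, f 0 = c₀ ∧ ∀ k, Step (f k) (f (k + 1))) ∧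
  ∀ c, Reachable c₀ c → Terminal c → ∀ i < n, c.st i = ct.st i ∧ c.pos i = ct.pos i

/-- The initial configuration with monomers on the x-axis, `pos m_i = (i,0)`, and
initial states `s₀`. -/
def mkInit (n : ℕ) (s₀ : ℕ → ℤ) : Config n where
  st := s₀
  pos := fun i => ((i : ℤ), 0)
  pos_zero := by simp
  step_unit := by
    intro i _
    have h : (((i + 1 : ℕ) : ℤ), (0 : ℤ)) - (((i : ℕ) : ℤ), (0 : ℤ)) = ((1 : ℤ), (0 : ℤ)) := by
      simp only [Prod.mk_sub_mk, Prod.mk.injEq]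
      constructor <;> push_cast <;> ring
    rw [h]
    simp [unitVecs]
  pos_inj := by
    intro i _ j _ h
    have h1 : ((i : ℕ) : ℤ) = ((j : ℕ) : ℤ) := congrArg Prod.fst h
    exact_mod_cast h1

/-- The initial configuration of the line-rotating Turning Machine `L^σ_n`:
`pos m_i = (i,0)`, states `σ` except the last monomer which has state `0`. -/
def lineInit (n : ℕ) (σ : ℤ) : Config n :=
  mkInit n (fun i => if i + 1 = n then 0 else σ)

/-- `Δs`: the number of rule applications made to monomer `i` on the way from `c₀` to `c`
(each application changes the state by one, towards `0`). -/
def dS {n : ℕ} (c₀ c : Config n) (i : ℕ) : ℤ := |c₀.st i - c.st i|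

/-- The set of positions occupied by a configuration. -/
def posSet {n : ℕ} (c : Config n) : Set Pt := {q | ∃ i < n, c.pos i = q}


/-- Adjacency on the triangular grid. -/
def Adj (p q : Pt) : Prop := q - p ∈ unitVecs

/-- The graph induced by the edge relation `E` on the set `S` is connected. -/
def ConnectedIn (E : Pt → Pt → Prop) (S : Set Pt) : Prop :=
  ∀ p ∈ S, ∀ q ∈ S, Relation.ReflTransGen (fun a b => a ∈ S ∧ b ∈ S ∧ E a b) p q

/-- A shape: a finite subset of the grid whose induced graph is connected. -/
def IsShape (S : Set Pt) : Prop := S.Finite ∧ ConnectedIn Adj S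

/-- `y`-monotone shape: the points of each row form a set of consecutive integers. -/
def YMonotone (S : Set Pt) : Prop :=
  ∀ j x₁ x₂ x₃ : ℤ, x₁ ≤ x₂ → x₂ ≤ x₃ → (x₁, j) ∈ S → (x₃, j) ∈ S → (x₂, j) ∈ S

/-- Adjacency along the `x` and `y` axes only. -/
def AdjXY (p q : Pt) : Prop :=
  q - p ∈ ({((1 : ℤ), (0 : ℤ)), (-1, 0), (0, 1), (0, -1)} : Set Pt)

/-- `xy`-connected: connected using only `±x` and `±y` edges. -/
def XYConnected (S : Set Pt) : Prop := ConnectedIn AdjXY S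

/-- The perimeter of a shape: its points having a neighbour outside the shape. -/
def perimeter (S : Set Pt) : Set Pt := {p ∈ S | ∃ v ∈ unitVecs, p + v ∉ S}

/-- Translation of a set of points. -/
def translate (t : Pt) (S : Set Pt) : Set Pt := (fun p => p + t) '' S

/-- The cardinality of the symmetric difference of two sets of points. -/
noncomputable def symmDiffCard (A B : Set Pt) : ℕ := ((A \ B) ∪ (B \ A)).ncard

/-- Error of a configuration w.r.t. a shape: the least cardinality, over all translations `t`,
of the symmetric difference of `S + t` and the set of monomer positions. -/
noncomputable def foldError {n : ℕ} (S : Set Pt) (c : Config n) : ℕ :=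
  sInf {m | ∃ t : Pt, symmDiffCard (translate t S) (posSet c) = m}

/-- The allowed steps of a `yw`-chain. -/
def ywSteps : Set Pt := {((0 : ℤ), (1 : ℤ)), (-1, 1)}

/-- `c 0, …, c (k-1)` is a `yw`-separator of the `y`-monotone shape `S`: a `yw`-chain inside `S`
from the bottommost row of `S` to the topmost row of `S`. -/
def IsYWSep (S : Set Pt) (k : ℕ) (c : ℕ → Pt) : Prop :=
  0 < k ∧ (∀ ℓ, ℓ + 1 < k → c (ℓ + 1) - c ℓ ∈ ywSteps) ∧ (∀ ℓ < k, c ℓ ∈ S) ∧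
    (∀ p ∈ S, (c 0).2 ≤ p.2) ∧ (∀ p ∈ S, p.2 ≤ (c (k - 1)).2)

/-- The shape `S` scaled by a factor `2`. -/
def scale2 (S : Set Pt) : Set Pt :=
  {q | ∃ p ∈ S, ∃ a b : ℤ, (a = 0 ∨ a = 1) ∧ (b = 0 ∨ b = 1) ∧ q = (2 * p.1 + a, 2 * p.2 + b)}

/-- The right boundary of a shape: the rightmost point of each nonempty row. -/
def rightBdry (S : Set Pt) : Set Pt := {p ∈ S | ∀ q ∈ S, q.2 = p.2 → q.1 ≤ p.1}

/-- The left boundary of a shape: the leftmost point of each nonempty row. -/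
def leftBdry (S : Set Pt) : Set Pt := {p ∈ S | ∀ q ∈ S, q.2 = p.2 → p.1 ≤ q.1}

/-- The "almost rectangle" `R_{k'}` from the definition of the `1`-gap spiral. -/
def spiralRing (k : ℤ) : Set Pt :=
  (({p : Pt | (p.2 = 2 * k ∨ p.2 = -(2 * k)) ∧ -(2 * k) ≤ p.1 ∧ p.1 ≤ 2 * k - 1} ∪
      {p : Pt | (p.1 = -(2 * k) ∨ p.1 = 2 * k - 1) ∧ -(2 * k) ≤ p.2 ∧ p.2 ≤ 2 * k}) ∪
      {(2 * k - 2, -(2 * k) + 2), (2 * k, -(2 * k)), (2 * k + 1, -(2 * k))}) \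
    {(2 * k - 1, -(2 * k) + 1)}

/-- The `k`-turn `1`-gap spiral `S_k`. -/
def spiral (k : ℕ) : Set Pt := ⋃ j ∈ Finset.Icc 1 k, spiralRing (j : ℤ)

/-- The base turning numbers `t_i` of the inside-to-outside sequence. -/
def tIn (t0 : ℤ) : ℕ → ℤ
  | 0 => t0
  | i + 1 => tIn t0 i + (if (i + 1) % 2 = 0 then 2 else 1)

/-- The inside-to-outside turning number sequence
`T_in(t₀) = [t₀]¹,[t₁]²,…,[t_{4k}]^{4k+1}, t_{4k}`. -/
def TInList (k : ℕ) (t0 : ℤ) : List ℤ :=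
  ((List.range (4 * k + 1)).flatMap fun i => List.replicate (i + 1) (tIn t0 i)) ++ [tIn t0 (4 * k)]

/-- The base turning numbers `t_i` of the outside-to-inside sequence. -/
def tOut (t0 : ℤ) : ℕ → ℤ
  | 0 => t0
  | i + 1 => tOut t0 i - (if (i + 1) % 2 = 0 then 1 else 2)

/-- The outside-to-inside turning number sequence
`T_out(t₀) = t₀,[t₀]^{4k+1},[t₁]^{4k},…,[t_{4k}]¹`. -/
def TOutList (k : ℕ) (t0 : ℤ) : List ℤ :=
  t0 :: ((List.range (4 * k + 1)).flatMap fun i => List.replicate (4 * k + 1 - i) (tOut t0 i))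

/-- The cross shape with arm length `a`. -/
def cross (a : ℤ) : Set Pt :=
  {p : Pt | p.2 = 0 ∧ -a ≤ p.1 ∧ p.1 ≤ a} ∪ {p : Pt | p.1 = 0 ∧ -a ≤ p.2 ∧ p.2 ≤ a}

/-- A positive zig-zag path: pairwise distinct points with steps in `{x, -x, y, w}`. -/
def PosZigZag (n : ℕ) (p : ℕ → Pt) : Prop :=
  (∀ i < n, ∀ j < n, p i = p j → i = j) ∧
    ∀ i, i + 1 < n → p (i + 1) - p i ∈ ({((1 : ℤ), (0 : ℤ)), (-1, 0), (0, 1), (-1, 1)} : Set Pt)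

/-- A negative zig-zag path: pairwise distinct points with steps in `{x, -x, -y, -w}`. -/
def NegZigZag (n : ℕ) (p : ℕ → Pt) : Prop :=
  (∀ i < n, ∀ j < n, p i = p j → i = j) ∧
    ∀ i, i + 1 < n → p (i + 1) - p i ∈ ({((1 : ℤ), (0 : ℤ)), (-1, 0), (0, -1), (1, -1)} : Set Pt)


/-! ### Auxiliary machinery for Statement 0 -/

/-- Number of fired monomers among `m_0, …, m_{i-1}` (those with state `0`). -/
def cntZ (s : ℕ → ℤ) (i : ℕ) : ℕ := ((Finset.range i).filter (fun j => s j = 0)).card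

/-- Canonical position determined by the states. -/
def posOf (s : ℕ → ℤ) (i : ℕ) : Pt := ((i : ℤ) - cntZ s i, (cntZ s i : ℤ))

/-- The invariant of reachable configurations of `L¹_n`. -/
def LineInv (n : ℕ) (c : Config n) : Prop :=
  (∀ i < n, c.st i = 0 ∨ (c.st i = 1 ∧ i + 1 < n)) ∧ ∀ i < n, c.pos i = posOf c.st i

lemma cntZ_congr {s s' : ℕ → ℤ} {i : ℕ} (h : ∀ j < i, s j = s' j) : cntZ s i = cntZ s' i := by
  unfold cntZ
  congr 1
  apply Finset.filter_congr
  intro j hj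
  rw [h j (Finset.mem_range.mp hj)]

lemma cntZ_succ_ne {s : ℕ → ℤ} {i : ℕ} (h : s i ≠ 0) : cntZ s (i + 1) = cntZ s i := by
  unfold cntZ
  rw [Finset.range_add_one, Finset.filter_insert, if_neg h]

lemma cntZ_nextSt_le {n : ℕ} {c : Config n} {i j : ℕ} (hij : j ≤ i) :
    cntZ (nextSt c i) j = cntZ c.st j := by
  apply cntZ_congr
  intro t ht
  have : t ≠ i := by omega
  simp [nextSt, this]

lemma cntZ_nextSt_gt {n : ℕ} {c : Config n} {i j : ℕ} (hij : i < j) (hs : c.st i = 1) :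
    cntZ (nextSt c i) j = cntZ c.st j + 1 := by
  have hins : (Finset.range j).filter (fun t => nextSt c i t = 0)
      = insert i ((Finset.range j).filter (fun t => c.st t = 0)) := by
    ext t
    simp only [Finset.mem_filter, Finset.mem_insert, Finset.mem_range, nextSt]
    by_cases ht : t = i
    · subst ht
      simp [hij, hs]
    · refine Finset.mem_filter.trans ?_; simp [ht]
  unfold cntZ
  rw [hins, Finset.card_insert_of_notMem]
  simp [hs]

lemma st_one {n : ℕ} {c : Config n} (hc : LineInv n c) {i : ℕ} (hi : i < n)
    (hs : c.st i ≠ 0) : c.st i = 1 ∧ i + 1 < n := by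
  rcases hc.1 i hi with h | h
  · exact absurd h hs
  · exact h

lemma dir_eq {n : ℕ} {c : Config n} (hc : LineInv n c) {i : ℕ} (hi : i < n)
    (hs : c.st i ≠ 0) : dir c i = (1, 0) ∧ delta c i = (-1, 1) := by
  obtain ⟨h1, hn⟩ := st_one hc hi hs
  have hp1 : c.pos (i + 1) = posOf c.st (i + 1) := hc.2 (i + 1) hn
  have hp0 : c.pos i = posOf c.st i := hc.2 i hi
  have hc1 : cntZ c.st (i + 1) = cntZ c.st i := cntZ_succ_ne hs
  have hd : dir c i = (1, 0) := by
    simp only [dir, hp1, hp0, posOf, hc1, Prod.mk_sub_mk, Prod.mk.injEq]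
    push_cast
    constructor <;> ring
  refine ⟨hd, ?_⟩
  simp only [delta, hd, h1]
  norm_num [rot]

lemma nextPos_sum {n : ℕ} {c : Config n} (hc : LineInv n c) {i : ℕ} (hi : i < n)
    (hs : c.st i ≠ 0) {j : ℕ} (hj : j < n) :
    (nextPos c i j).1 + (nextPos c i j).2 = (j : ℤ) := by
  have hδ := (dir_eq hc hi hs).2
  have hp : c.pos j = posOf c.st j := hc.2 j hj
  unfold nextPos
  by_cases h : i < j <;> simp only [h, if_true, if_false, hδ, hp, posOf, Prod.fst_add,
    Prod.snd_add, reduceIte] <;> ring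

lemma applicable_of_inv {n : ℕ} {c : Config n} (hc : LineInv n c) {i : ℕ} (hi : i < n)
    (hs : c.st i ≠ 0) : Applicable c i := by
  have hδ := (dir_eq hc hi hs).2
  have hd := (dir_eq hc hi hs).1
  refine ⟨⟨nextSt c i, nextPos c i, ?_, ?_, ?_⟩, hi, hs, fun j _ => rfl, fun j _ => rfl⟩
  · simp [nextPos, c.pos_zero]
  · intro j hjn
    by_cases h1 : i < j
    · have h2 : i < j + 1 := by omega
      simp only [nextPos, h1, h2, if_true]
      have : c.pos (j + 1) + delta c i - (c.pos j + delta c i) = c.pos (j + 1) - c.pos j := by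
        abel
      rw [this]
      exact c.step_unit j hjn
    · by_cases h2 : j = i
      · subst h2
        have h3 : j < j + 1 := by omega
        simp only [nextPos, h3, if_true, lt_irrefl, if_false]
        have : c.pos (j + 1) + delta c j - c.pos j = dir c j + delta c j := by
          unfold dir; abel
        rw [this, hd, hδ]
        norm_num [unitVecs]
      · have h3 : ¬ i < j + 1 := by omega
        simp only [nextPos, h1, h3, if_false]
        exact c.step_unit j hjn
  · intro a ha b hb h
    have h2 := congrArg (fun p : Pt => p.1 + p.2) h
    rw [nextPos_sum hc hi hs ha, nextPos_sum hc hi hs hb] at h2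
    exact_mod_cast h2

lemma stepAt_inv {n : ℕ} {c c' : Config n} (hc : LineInv n c) {i : ℕ}
    (h : StepAt c i c') : LineInv n c' := by
  obtain ⟨hi, hs, hst, hpos⟩ := h
  obtain ⟨h1, hn⟩ := st_one hc hi hs
  have hδ := (dir_eq hc hi hs).2
  have hsteq : ∀ j < n, c'.st j = nextSt c i j := hst
  constructor
  · intro j hj
    rw [hsteq j hj]
    unfold nextSt
    by_cases hji : j = i
    · subst hji
      left
      simp [h1]
    · simp only [hji, if_false]
      exact hc.1 j hj
  · intro j hj
    have hcnt : cntZ c'.st j = cntZ (nextSt c i) j :=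
      cntZ_congr (fun t ht => hsteq t (by omega))
    rw [hpos j hj]
    unfold nextPos
    by_cases hij : i < j
    · rw [if_pos hij, hc.2 j hj]
      simp only [posOf, hcnt, cntZ_nextSt_gt hij h1, hδ, Prod.mk_add_mk, Prod.mk.injEq]
      push_cast
      constructor <;> ring
    · rw [if_neg hij, hc.2 j hj]
      simp only [posOf, hcnt, cntZ_nextSt_le (by omega : j ≤ i)]

lemma reachable_inv {n : ℕ} {c : Config n} (h : Reachable (lineInit n 1) c) :
    LineInv n c := by
  have hinit : LineInv n (lineInit n 1) := by
    constructor
    · intro i hi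
      simp only [lineInit, mkInit]
      by_cases h1 : i + 1 = n
      · simp [h1]
      · exact Or.inr ⟨by simp [h1], by omega⟩
    · intro i hi
      have hz : cntZ (lineInit n 1).st i = 0 := by
        unfold cntZ
        rw [Finset.card_eq_zero, Finset.filter_eq_empty_iff]
        intro j hj
        have hj' : j + 1 ≠ n := by
          have := Finset.mem_range.mp hj
          omega
        simp [lineInit, mkInit, hj']
      show (lineInit n 1).pos i = posOf (lineInit n 1).st i
      simp only [posOf, hz, Nat.cast_zero, sub_zero]
      rfl
  induction h with
  | refl => exact hinit
  | tail _ hstep ih =>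
    obtain ⟨i, hi⟩ := hstep
    exact stepAt_inv ih hi

/-- Energy: total number of remaining turns. -/
def energy {n : ℕ} (c : Config n) : ℕ := ∑ i ∈ Finset.range n, (c.st i).toNat

lemma step_energy {n : ℕ} {c c' : Config n} (hc : LineInv n c) {i : ℕ}
    (h : StepAt c i c') : energy c' + 1 = energy c := by
  obtain ⟨hi, hs, hst, hpos⟩ := h
  obtain ⟨h1, hn⟩ := st_one hc hi hs
  have hmem : i ∈ Finset.range n := Finset.mem_range.mpr hi
  unfold energy
  rw [← Finset.add_sum_erase _ _ hmem, ← Finset.add_sum_erase _ _ hmem]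
  have e1 : (c'.st i).toNat = 0 := by
    rw [hst i hi]
    simp [nextSt, h1]
  have e2 : (c.st i).toNat = 1 := by rw [h1]; rfl
  have e3 : ∑ j ∈ (Finset.range n).erase i, (c'.st j).toNat
      = ∑ j ∈ (Finset.range n).erase i, (c.st j).toNat := by
    apply Finset.sum_congr rfl
    intro j hj
    have hjn : j < n := Finset.mem_range.mp (Finset.mem_of_mem_erase hj)
    have hji : j ≠ i := Finset.ne_of_mem_erase hj
    rw [hst j hjn]
    simp [nextSt, hji]
  rw [e1, e2, e3]
  omega

lemma terminal_zero {n : ℕ} {c : Config n} (hc : LineInv n c) (ht : Terminal c) :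
    ∀ i < n, c.st i = 0 := by
  intro i hi
  by_contra hs
  exact ht i (applicable_of_inv hc hi hs)

lemma terminal_pos {n : ℕ} {c : Config n} (hc : LineInv n c) (ht : Terminal c) :
    ∀ i < n, c.pos i = (0, (i : ℤ)) := by
  intro i hi
  have hz : cntZ c.st i = i := by
    unfold cntZ
    have : (Finset.range i).filter (fun j => c.st j = 0) = Finset.range i := by
      apply Finset.filter_true_of_mem
      intro j hj
      exact terminal_zero hc ht j (by have := Finset.mem_range.mp hj; omega)
    rw [this, Finset.card_range]
  rw [hc.2 i hi]
  simp [posOf, hz]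

/-- The target configuration: the line along `(0,1)`. -/
def lineTarget (n : ℕ) : Config n where
  st := fun _ => 0
  pos := fun i => (0, (i : ℤ))
  pos_zero := rfl
  step_unit := by
    intro i _
    have : ((0 : ℤ), ((i + 1 : ℕ) : ℤ)) - ((0 : ℤ), ((i : ℕ) : ℤ)) = ((0 : ℤ), (1 : ℤ)) := by
      simp only [Prod.mk_sub_mk, Prod.mk.injEq]
      constructor <;> push_cast <;> ring
    rw [this]
    simp [unitVecs]
  pos_inj := by
    intro i _ j _ h
    have : ((i : ℕ) : ℤ) = ((j : ℕ) : ℤ) := congrArg Prod.snd h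
    exact_mod_cast this


/-- For every `n`, the line-rotating Turning Machine `L¹_n` computes its
target configuration (the line along `ρ(1,0) = (0,1)` with all states `0`); moreover, in every
reachable configuration of `L¹_n` no monomer is blocked. -/
theorem line_rotate_pi_div_three (n : ℕ) :
    (∃ ct : Config n, Computes (lineInit n 1) ct ∧ (∀ i < n, ct.st i = 0) ∧
        ∀ i < n, ct.pos i = zsmulPt (i : ℤ) (rot (1, 0))) ∧
    ∀ c : Config n, Reachable (lineInit n 1) c → ∀ i, ¬ Blocked c i := by
  constructor
  · refine ⟨lineTarget n, ⟨?_, ?_⟩, fun i _ => rfl, ?_⟩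
    · rintro ⟨f, hf0, hstep⟩
      have key : ∀ k, LineInv n (f k) ∧ energy (f k) + k ≤ energy (f 0) := by
        intro k
        induction k with
        | zero =>
          refine ⟨?_, by omega⟩
          rw [hf0]
          exact reachable_inv Relation.ReflTransGen.refl
        | succ k ih =>
          obtain ⟨i, hi⟩ := hstep k
          exact ⟨stepAt_inv ih.1 hi, by have := step_energy ih.1 hi; omega⟩
      have := (key (energy (f 0) + 1)).2
      omega
    · intro c hr ht i hi
      have hc := reachable_inv hr
      exact ⟨terminal_zero hc ht i hi, terminal_pos hc ht i hi⟩
    · intro i _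
      show ((0 : ℤ), (i : ℤ)) = zsmulPt (i : ℤ) (rot (1, 0))
      simp only [zsmulPt, rot, Prod.mk.injEq]
      constructor <;> ring
  · intro c hr i hb
    obtain ⟨hi, hs, hna⟩ := hb
    exact hna (applicable_of_inv (reachable_inv hr) hi hs)


end TuringMachineFolding
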